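/- For all integers 1 ≤ i ≤ j and all signs ε, ε′ ∈ {−1, +1}: N(εF_i, ε′F_j) = N(εF_1, ε′F_{j−i+1}); that is, the number of nonzero integers whose far-difference representation has smallest-index summand εF_i and largest-index summand ε′F_j equals the number whose representation has smallest-index summand εF_1 and largest-index summand ε′F_{j−i+1}. -/
import Mathlib


/-- The Fibonacci numbers indexed as `F 1 = 1, F 2 = 2, F 3 = 3, F 4 = 5, …`,
so `F (n+1) = F n + F (n-1)`. -/
def F (n : ℕ) : ℕ := Nat.fib (n + 1)

/-- `(P, N)` encodes a far-difference representation: `P` is the set of indices of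
positive summands and `N` the set of indices of negative summands; all indices are `≥ 1`,
same-sign indices differ by at least `4`, and opposite-sign indices differ by at least `3`. -/
def IsFarDiff (P N : Finset ℕ) : Prop :=
  (∀ i ∈ P, 1 ≤ i) ∧ (∀ i ∈ N, 1 ≤ i) ∧
  (∀ i ∈ P, ∀ j ∈ P, i < j → 4 ≤ j - i) ∧
  (∀ i ∈ N, ∀ j ∈ N, i < j → 4 ≤ j - i) ∧
  (∀ i ∈ P, ∀ j ∈ N, (i < j → 3 ≤ j - i) ∧ (j < i → 3 ≤ i - j) ∧ i ≠ j)

/-- The integer represented by the far-difference data `(P, N)`: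
`∑_{i ∈ P} F i − ∑_{i ∈ N} F i`. -/
def fdVal (P N : Finset ℕ) : ℤ :=
  (∑ i ∈ P, (F i : ℤ)) - ∑ i ∈ N, (F i : ℤ)

/-- `S n = F n + F (n-4) + F (n-8) + ⋯`, the sum over positive indices, with `S 0 = 0`. -/
def S : ℕ → ℕ
  | 0 => 0
  | n + 1 => F (n + 1) + S (n + 1 - 4)

/-- The summand `ε F i` occurs in the representation `(P, N)`:
`i ∈ P` if `ε = 1`, and `i ∈ N` if `ε = -1`. -/
def SignedMem (ε : ℤ) (i : ℕ) (P N : Finset ℕ) : Prop :=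
  (ε = 1 ∧ i ∈ P) ∨ (ε = -1 ∧ i ∈ N)

/-- The set of (nonzero) integers whose far-difference representation has smallest-index
summand `ε F i` and largest-index summand `ε' F j`. -/
def fdSet (ε : ℤ) (i : ℕ) (ε' : ℤ) (j : ℕ) : Set ℤ :=
  {m : ℤ | ∃ P N : Finset ℕ, IsFarDiff P N ∧ fdVal P N = m ∧
    SignedMem ε i P N ∧ SignedMem ε' j P N ∧ ∀ r ∈ P ∪ N, i ≤ r ∧ r ≤ j}

/-- `N(ε F i, ε' F j)`: the number of nonzero integers whose far-difference
representation has smallest-index summand `ε F i` and largest-index summand `ε' F j`. -/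
noncomputable def fdCount (ε : ℤ) (i : ℕ) (ε' : ℤ) (j : ℕ) : ℕ :=
  (fdSet ε i ε' j).ncard

lemma F_mono {a b : ℕ} (h : a ≤ b) : F a ≤ F b := Nat.fib_mono (by omega)

lemma F_pos (n : ℕ) : 0 < F n := Nat.fib_pos.mpr (by omega)

lemma S_zero : S 0 = 0 := by rw [S]

lemma S_succ (n : ℕ) : S (n + 1) = F (n + 1) + S (n - 3) := by
  rw [S, show n + 1 - 4 = n - 3 by omega]

lemma S_le_succ : ∀ n, S n ≤ S (n + 1) := by
  intro n
  induction n using Nat.strong_induction_on with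
  | _ n ih =>
    match n with
    | 0 => rw [S_zero]; omega
    | m + 1 =>
      rw [S_succ, S_succ]
      have h1 : F (m + 1) ≤ F (m + 1 + 1) := F_mono (by omega)
      rcases Nat.lt_or_ge m 3 with h | h
      · have e1 : m - 3 = 0 := by omega
        have e2 : m + 1 - 3 = 0 := by omega
        rw [e1, e2]
        omega
      · have h2 : S (m - 3) ≤ S (m - 3 + 1) := ih (m - 3) (by omega)
        have e : m + 1 - 3 = m - 3 + 1 := by omega
        rw [e]
        omega

lemma S_mono : Monotone S := monotone_nat_of_le_succ S_le_succ

lemma S_one : S 1 = 1 := by rw [S_succ, S_zero]; decide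
lemma S_two : S 2 = 2 := by rw [S_succ, S_zero]; decide
lemma S_three : S 3 = 3 := by rw [S_succ, S_zero]; decide

lemma F_eq : ∀ n, F n = S (n - 1) + S (n - 3) + 1 := by
  intro n
  induction n using Nat.strong_induction_on with
  | _ n ih =>
    match n with
    | 0 => show F 0 = S 0 + S 0 + 1; rw [S_zero]; decide
    | 1 => show F 1 = S 0 + S 0 + 1; rw [S_zero]; decide
    | 2 => show F 2 = S 1 + S 0 + 1; rw [S_zero, S_one]; decide
    | 3 => show F 3 = S 2 + S 0 + 1; rw [S_zero, S_two]; decide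
    | 4 => show F 4 = S 3 + S 1 + 1; rw [S_one, S_three]; decide
    | (k+5) =>
      have h3 : F (k + 3) = S (k + 2) + S k + 1 := ih (k + 3) (by omega)
      have hf : F (k + 5) = F (k + 4) + F (k + 3) := by
        show Nat.fib (k + 6) = Nat.fib (k + 5) + Nat.fib (k + 4)
        rw [show k + 6 = k + 4 + 2 from rfl, Nat.fib_add_two,
          show k + 4 + 1 = k + 5 from rfl]
        omega
      have hs : S (k + 4) = F (k + 4) + S k := by
        rw [show k + 4 = k + 3 + 1 from rfl, S_succ, show k + 3 - 3 = k from rfl]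
      show F (k + 5) = S (k + 4) + S (k + 2) + 1
      omega

lemma sum_le_S : ∀ (n : ℕ) (P : Finset ℕ), (∀ r ∈ P, 1 ≤ r) →
    (∀ a ∈ P, ∀ b ∈ P, a < b → 4 ≤ b - a) → (∀ r ∈ P, r ≤ n) →
    (∑ r ∈ P, F r) ≤ S n := by
  intro n
  induction n using Nat.strong_induction_on with
  | _ n ih =>
    intro P h1 h4 hb
    rcases P.eq_empty_or_nonempty with rfl | hne
    · simp
    · have hm := P.max'_mem hne
      set m := P.max' hne with hm'
      have hmn : m ≤ n := hb m hm
      have h1m : 1 ≤ m := h1 m hm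
      have hn1 : 1 ≤ n := le_trans h1m hmn
      have key : ∀ r ∈ P.erase m, r ≤ n - 4 := by
        intro r hr
        have hrP := Finset.mem_of_mem_erase hr
        have hrm : r ≠ m := Finset.ne_of_mem_erase hr
        have hle : r ≤ m := Finset.le_max' P r hrP
        have h4' : 4 ≤ m - r := h4 r hrP m hm (by omega)
        omega
      have hsum : ∑ r ∈ P.erase m, F r ≤ S (n - 4) :=
        ih (n - 4) (by omega) _ (fun r hr => h1 r (Finset.mem_of_mem_erase hr))
          (fun a ha b hb' hab =>
            h4 a (Finset.mem_of_mem_erase ha) b (Finset.mem_of_mem_erase hb') hab) key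
      have hsplit : F m + ∑ r ∈ P.erase m, F r = ∑ r ∈ P, F r :=
        Finset.add_sum_erase _ _ hm
      have hSn : S n = F n + S (n - 4) := by
        cases n with
        | zero => omega
        | succ k => rw [S]
      have hFm : F m ≤ F n := F_mono hmn
      omega

lemma sum_le_S' {P : Finset ℕ} {n : ℕ} (h1 : ∀ r ∈ P, 1 ≤ r)
    (h4 : ∀ a ∈ P, ∀ b ∈ P, a < b → 4 ≤ b - a) (hb : ∀ r ∈ P, r ≤ n) :
    (∑ r ∈ P, (F r : ℤ)) ≤ (S n : ℤ) := by
  have := sum_le_S n P h1 h4 hb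
  exact_mod_cast this

lemma sum_nonneg' (P : Finset ℕ) : (0 : ℤ) ≤ ∑ r ∈ P, (F r : ℤ) :=
  Finset.sum_nonneg fun r _ => by positivity

lemma isFarDiff_comm {P N : Finset ℕ} (h : IsFarDiff P N) : IsFarDiff N P := by
  obtain ⟨h1, h2, h3, h4, h5⟩ := h
  refine ⟨h2, h1, h4, h3, fun a ha b hb => ?_⟩
  obtain ⟨c1, c2, c3⟩ := h5 b hb a ha
  exact ⟨c2, c1, fun he => c3 he.symm⟩

lemma isFarDiff_mono {P N P' N' : Finset ℕ} (hP : P' ⊆ P) (hN : N' ⊆ N)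
    (h : IsFarDiff P N) : IsFarDiff P' N' := by
  obtain ⟨h1, h2, h3, h4, h5⟩ := h
  exact ⟨fun i hi => h1 i (hP hi), fun i hi => h2 i (hN hi),
    fun a ha b hb => h3 a (hP ha) b (hP hb),
    fun a ha b hb => h4 a (hN ha) b (hN hb),
    fun a ha b hb => h5 a (hP ha) b (hN hb)⟩

lemma mem_P'_of_mem_P {n : ℕ} {P N P' N' : Finset ℕ}
    (h : IsFarDiff P N) (h' : IsFarDiff P' N')
    (hb : ∀ r ∈ P ∪ N, r ≤ n) (hb' : ∀ r ∈ P' ∪ N', r ≤ n)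
    (heq : fdVal P N = fdVal P' N') (hn : n ∈ P) : n ∈ P' := by
  have hNle : ∀ r ∈ N, r ≤ n - 3 := by
    intro r hr
    obtain ⟨c1, c2, c3⟩ := h.2.2.2.2 n hn r hr
    have hrn : r ≤ n := hb r (Finset.mem_union_right _ hr)
    rcases Nat.lt_or_ge r n with hlt | hge
    · have := c2 hlt; omega
    · omega
  have hNsum : (∑ r ∈ N, (F r : ℤ)) ≤ (S (n - 3) : ℤ) :=
    sum_le_S' h.2.1 h.2.2.2.1 hNle
  have hPsum : (F n : ℤ) ≤ ∑ r ∈ P, (F r : ℤ) :=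
    Finset.single_le_sum (f := fun r => (F r : ℤ)) (fun r _ => by positivity) hn
  have hFn : (F n : ℤ) = (S (n-1) : ℤ) + (S (n-3) : ℤ) + 1 := by
    have := F_eq n; push_cast [this]; ring
  have hlow : (S (n-1) : ℤ) + 1 ≤ fdVal P N := by
    unfold fdVal; linarith
  by_contra hn'
  rcases em (n ∈ N') with hN' | hN'
  · have hP'le : ∀ r ∈ P', r ≤ n - 3 := by
      intro r hr
      obtain ⟨c1, c2, c3⟩ := h'.2.2.2.2 r hr n hN'
      have hrn : r ≤ n := hb' r (Finset.mem_union_left _ hr)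
      rcases Nat.lt_or_ge r n with hlt | hge
      · have := c1 hlt; omega
      · omega
    have h1 : (∑ r ∈ P', (F r : ℤ)) ≤ (S (n - 3) : ℤ) :=
      sum_le_S' h'.1 h'.2.2.1 hP'le
    have h2 : (F n : ℤ) ≤ ∑ r ∈ N', (F r : ℤ) :=
      Finset.single_le_sum (f := fun r => (F r : ℤ)) (fun r _ => by positivity) hN'
    have hS1 : (0:ℤ) ≤ (S (n-1) : ℤ) := by positivity
    have : fdVal P' N' < fdVal P N := by
      unfold fdVal at hlow ⊢; linarith
    omega
  · have hball : ∀ r ∈ P', r ≤ n - 1 := by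
      intro r hr
      have hrn := hb' r (Finset.mem_union_left _ hr)
      have : r ≠ n := by rintro rfl; exact hn' hr
      omega
    have h1 : (∑ r ∈ P', (F r : ℤ)) ≤ (S (n - 1) : ℤ) :=
      sum_le_S' h'.1 h'.2.2.1 hball
    have h2 := sum_nonneg' N'
    have : fdVal P' N' < fdVal P N := by
      unfold fdVal at hlow ⊢; linarith
    omega

lemma fdVal_comm (P N : Finset ℕ) : fdVal N P = -fdVal P N := by
  unfold fdVal; ring

lemma mem_N'_of_mem_N {n : ℕ} {P N P' N' : Finset ℕ}
    (h : IsFarDiff P N) (h' : IsFarDiff P' N')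
    (hb : ∀ r ∈ P ∪ N, r ≤ n) (hb' : ∀ r ∈ P' ∪ N', r ≤ n)
    (heq : fdVal P N = fdVal P' N') (hn : n ∈ N) : n ∈ N' := by
  refine mem_P'_of_mem_P (isFarDiff_comm h) (isFarDiff_comm h')
    (fun r hr => hb r (by rwa [Finset.union_comm]))
    (fun r hr => hb' r (by rwa [Finset.union_comm])) ?_ hn
  calc fdVal N P = -fdVal P N := fdVal_comm P N
    _ = -fdVal P' N' := by rw [heq]
    _ = fdVal N' P' := (fdVal_comm P' N').symm

theorem fd_unique : ∀ (n : ℕ) (P N P' N' : Finset ℕ), IsFarDiff P N → IsFarDiff P' N' →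
    (∀ r ∈ P ∪ N, r ≤ n) → (∀ r ∈ P' ∪ N', r ≤ n) →
    fdVal P N = fdVal P' N' → P = P' ∧ N = N' := by
  intro n
  induction n using Nat.strong_induction_on with
  | _ n ih =>
    intro P N P' N' h h' hb hb' heq
    rcases Nat.eq_zero_or_pos n with rfl | hn0
    · have e : ∀ (Q : Finset ℕ), (∀ r ∈ Q, 1 ≤ r) → (∀ r ∈ Q, r ≤ 0) → Q = ∅ := by
        intro Q hq1 hq2
        ext r; simp only [Finset.notMem_empty, iff_false]
        intro hr; have := hq1 r hr; have := hq2 r hr; omega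
      have eP := e P h.1 (fun r hr => hb r (Finset.mem_union_left _ hr))
      have eN := e N h.2.1 (fun r hr => hb r (Finset.mem_union_right _ hr))
      have eP' := e P' h'.1 (fun r hr => hb' r (Finset.mem_union_left _ hr))
      have eN' := e N' h'.2.1 (fun r hr => hb' r (Finset.mem_union_right _ hr))
      rw [eP, eN, eP', eN']; exact ⟨rfl, rfl⟩
    by_cases hP : n ∈ P
    · have hP' : n ∈ P' := mem_P'_of_mem_P h h' hb hb' heq hP
      have heq' : fdVal (P.erase n) N = fdVal (P'.erase n) N' := by
        have e1 := Finset.add_sum_erase P (fun r => (F r : ℤ)) hP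
        have e2 := Finset.add_sum_erase P' (fun r => (F r : ℤ)) hP'
        unfold fdVal at heq ⊢
        linarith
      have hbe : ∀ r ∈ P.erase n ∪ N, r ≤ n - 1 := by
        intro r hr
        rcases Finset.mem_union.mp hr with h1 | h1
        · have hm := Finset.mem_of_mem_erase h1
          have hne := Finset.ne_of_mem_erase h1
          have := hb r (Finset.mem_union_left _ hm); omega
        · have hne := (h.2.2.2.2 n hP r h1).2.2
          have := hb r (Finset.mem_union_right _ h1); omega
      have hbe' : ∀ r ∈ P'.erase n ∪ N', r ≤ n - 1 := by
        intro r hr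
        rcases Finset.mem_union.mp hr with h1 | h1
        · have hm := Finset.mem_of_mem_erase h1
          have hne := Finset.ne_of_mem_erase h1
          have := hb' r (Finset.mem_union_left _ hm); omega
        · have hne := (h'.2.2.2.2 n hP' r h1).2.2
          have := hb' r (Finset.mem_union_right _ h1); omega
      obtain ⟨e1, e2⟩ := ih (n - 1) (by omega) _ _ _ _
        (isFarDiff_mono (Finset.erase_subset _ _) (subset_refl _) h)
        (isFarDiff_mono (Finset.erase_subset _ _) (subset_refl _) h')
        hbe hbe' heq'
      constructor
      · rw [← Finset.insert_erase hP, ← Finset.insert_erase hP', e1]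
      · exact e2
    · by_cases hN : n ∈ N
      · have hN' : n ∈ N' := mem_N'_of_mem_N h h' hb hb' heq hN
        have heq' : fdVal P (N.erase n) = fdVal P' (N'.erase n) := by
          have e1 := Finset.add_sum_erase N (fun r => (F r : ℤ)) hN
          have e2 := Finset.add_sum_erase N' (fun r => (F r : ℤ)) hN'
          unfold fdVal at heq ⊢
          linarith
        have hbe : ∀ r ∈ P ∪ N.erase n, r ≤ n - 1 := by
          intro r hr
          rcases Finset.mem_union.mp hr with h1 | h1
          · have hne := (h.2.2.2.2 r h1 n hN).2.2
            have := hb r (Finset.mem_union_left _ h1); omega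
          · have hm := Finset.mem_of_mem_erase h1
            have hne := Finset.ne_of_mem_erase h1
            have := hb r (Finset.mem_union_right _ hm); omega
        have hbe' : ∀ r ∈ P' ∪ N'.erase n, r ≤ n - 1 := by
          intro r hr
          rcases Finset.mem_union.mp hr with h1 | h1
          · have hne := (h'.2.2.2.2 r h1 n hN').2.2
            have := hb' r (Finset.mem_union_left _ h1); omega
          · have hm := Finset.mem_of_mem_erase h1
            have hne := Finset.ne_of_mem_erase h1
            have := hb' r (Finset.mem_union_right _ hm); omega
        obtain ⟨e1, e2⟩ := ih (n - 1) (by omega) _ _ _ _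
          (isFarDiff_mono (subset_refl _) (Finset.erase_subset _ _) h)
          (isFarDiff_mono (subset_refl _) (Finset.erase_subset _ _) h')
          hbe hbe' heq'
        constructor
        · exact e1
        · rw [← Finset.insert_erase hN, ← Finset.insert_erase hN', e2]
      · by_cases hP' : n ∈ P'
        · exact absurd (mem_P'_of_mem_P h' h hb' hb heq.symm hP') hP
        · by_cases hN' : n ∈ N'
          · exact absurd (mem_N'_of_mem_N h' h hb' hb heq.symm hN') hN
          · refine ih (n - 1) (by omega) _ _ _ _ h h' ?_ ?_ heq
            · intro r hr
              have := hb r hr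
              have : r ≠ n := by
                rintro rfl
                rcases Finset.mem_union.mp hr with h1 | h1
                exacts [hP h1, hN h1]
              omega
            · intro r hr
              have := hb' r hr
              have : r ≠ n := by
                rintro rfl
                rcases Finset.mem_union.mp hr with h1 | h1
                exacts [hP' h1, hN' h1]
              omega

theorem fd_unique' {P N P' N' : Finset ℕ} (h : IsFarDiff P N) (h' : IsFarDiff P' N')
    (heq : fdVal P N = fdVal P' N') : P = P' ∧ N = N' := by
  refine fd_unique ((P ∪ N ∪ P' ∪ N').sup id) P N P' N' h h' ?_ ?_ heq
  · intro r hr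
    exact Finset.le_sup (f := id) (by simp only [Finset.mem_union] at hr ⊢; tauto)
  · intro r hr
    exact Finset.le_sup (f := id) (by simp only [Finset.mem_union] at hr ⊢; tauto)

lemma image_sub_add {P : Finset ℕ} {d : ℕ} (h : ∀ r ∈ P, d ≤ r) :
    (P.image (· - d)).image (· + d) = P := by
  rw [Finset.image_image]
  have : P.image ((· + d) ∘ (· - d)) = P.image id := by
    apply Finset.image_congr
    intro x hx
    simp only [Function.comp_apply, id_eq]
    have := h x hx
    omega
  rw [this, Finset.image_id]

lemma image_add_sub (P : Finset ℕ) (d : ℕ) : (P.image (· + d)).image (· - d) = P := by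
  rw [Finset.image_image]
  have : P.image ((· - d) ∘ (· + d)) = P.image id := by
    apply Finset.image_congr
    intro x hx
    simp only [Function.comp_apply, id_eq]
    omega
  rw [this, Finset.image_id]

lemma isFarDiff_image_add {P N : Finset ℕ} (d : ℕ) (h : IsFarDiff P N) :
    IsFarDiff (P.image (· + d)) (N.image (· + d)) := by
  obtain ⟨h1, h2, h3, h4, h5⟩ := h
  refine ⟨?_, ?_, ?_, ?_, ?_⟩
  · intro a ha; obtain ⟨x, hx, rfl⟩ := Finset.mem_image.mp ha
    have := h1 x hx; omega
  · intro a ha; obtain ⟨x, hx, rfl⟩ := Finset.mem_image.mp ha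
    have := h2 x hx; omega
  · intro a ha b hb hab
    obtain ⟨x, hx, rfl⟩ := Finset.mem_image.mp ha
    obtain ⟨y, hy, rfl⟩ := Finset.mem_image.mp hb
    have := h3 x hx y hy (by omega); omega
  · intro a ha b hb hab
    obtain ⟨x, hx, rfl⟩ := Finset.mem_image.mp ha
    obtain ⟨y, hy, rfl⟩ := Finset.mem_image.mp hb
    have := h4 x hx y hy (by omega); omega
  · intro a ha b hb
    obtain ⟨x, hx, rfl⟩ := Finset.mem_image.mp ha
    obtain ⟨y, hy, rfl⟩ := Finset.mem_image.mp hb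
    obtain ⟨c1, c2, c3⟩ := h5 x hx y hy
    refine ⟨fun hlt => ?_, fun hlt => ?_, fun he => ?_⟩
    · have := c1 (by omega); omega
    · have := c2 (by omega); omega
    · exact c3 (by omega)

lemma isFarDiff_image_sub {P N : Finset ℕ} (d : ℕ)
    (hP : ∀ r ∈ P, d + 1 ≤ r) (hN : ∀ r ∈ N, d + 1 ≤ r) (h : IsFarDiff P N) :
    IsFarDiff (P.image (· - d)) (N.image (· - d)) := by
  obtain ⟨h1, h2, h3, h4, h5⟩ := h
  refine ⟨?_, ?_, ?_, ?_, ?_⟩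
  · intro a ha; obtain ⟨x, hx, rfl⟩ := Finset.mem_image.mp ha
    have := hP x hx; omega
  · intro a ha; obtain ⟨x, hx, rfl⟩ := Finset.mem_image.mp ha
    have := hN x hx; omega
  · intro a ha b hb hab
    obtain ⟨x, hx, rfl⟩ := Finset.mem_image.mp ha
    obtain ⟨y, hy, rfl⟩ := Finset.mem_image.mp hb
    have hx' := hP x hx; have hy' := hP y hy
    have := h3 x hx y hy (by omega); omega
  · intro a ha b hb hab
    obtain ⟨x, hx, rfl⟩ := Finset.mem_image.mp ha
    obtain ⟨y, hy, rfl⟩ := Finset.mem_image.mp hb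
    have hx' := hN x hx; have hy' := hN y hy
    have := h4 x hx y hy (by omega); omega
  · intro a ha b hb
    obtain ⟨x, hx, rfl⟩ := Finset.mem_image.mp ha
    obtain ⟨y, hy, rfl⟩ := Finset.mem_image.mp hb
    have hx' := hP x hx; have hy' := hN y hy
    obtain ⟨c1, c2, c3⟩ := h5 x hx y hy
    refine ⟨fun hlt => ?_, fun hlt => ?_, fun he => ?_⟩
    · have := c1 (by omega); omega
    · have := c2 (by omega); omega
    · exact c3 (by omega)


/-- For `1 ≤ i ≤ j` and signs `ε, ε' ∈ {−1, +1}`,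
`N(ε F_i, ε' F_j) = N(ε F_1, ε' F_{j−i+1})`. -/
theorem fardifference_shift (i j : ℕ) (hi : 1 ≤ i) (hij : i ≤ j)
    (ε ε' : ℤ) (hε : ε = 1 ∨ ε = -1) (hε' : ε' = 1 ∨ ε' = -1) :
    fdCount ε i ε' j = fdCount ε 1 ε' (j - i + 1) := by
  classical
  set d := i - 1 with hd
  set j' := j - i + 1 with hj'
  have hi' : i = d + 1 := by omega
  have hjd : j' + d = j := by omega
  set val : Finset ℕ × Finset ℕ → ℤ := fun p => fdVal p.1 p.2 with hval_def
  set RA : Set (Finset ℕ × Finset ℕ) := {p | IsFarDiff p.1 p.2 ∧ SignedMem ε i p.1 p.2 ∧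
    SignedMem ε' j p.1 p.2 ∧ ∀ r ∈ p.1 ∪ p.2, i ≤ r ∧ r ≤ j} with hRA
  set RB : Set (Finset ℕ × Finset ℕ) := {p | IsFarDiff p.1 p.2 ∧ SignedMem ε 1 p.1 p.2 ∧
    SignedMem ε' j' p.1 p.2 ∧ ∀ r ∈ p.1 ∪ p.2, 1 ≤ r ∧ r ≤ j'} with hRB
  have hA : fdSet ε i ε' j = val '' RA := by
    ext m
    constructor
    · rintro ⟨P, N, h1, h2, h3, h4, h5⟩
      exact ⟨(P, N), ⟨h1, h3, h4, h5⟩, h2⟩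
    · rintro ⟨⟨P, N⟩, ⟨h1, h3, h4, h5⟩, h2⟩
      exact ⟨P, N, h1, h2, h3, h4, h5⟩
  have hB : fdSet ε 1 ε' j' = val '' RB := by
    ext m
    constructor
    · rintro ⟨P, N, h1, h2, h3, h4, h5⟩
      exact ⟨(P, N), ⟨h1, h3, h4, h5⟩, h2⟩
    · rintro ⟨⟨P, N⟩, ⟨h1, h3, h4, h5⟩, h2⟩
      exact ⟨P, N, h1, h2, h3, h4, h5⟩
  have hvalinj : ∀ R : Set (Finset ℕ × Finset ℕ), (∀ p ∈ R, IsFarDiff p.1 p.2) →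
      (val '' R).ncard = R.ncard := by
    intro R hR
    apply Set.ncard_image_of_injOn
    intro p hp q hq hpq
    obtain ⟨e1, e2⟩ := fd_unique' (hR p hp) (hR q hq) hpq
    exact Prod.ext e1 e2
  set Φ : Finset ℕ × Finset ℕ → Finset ℕ × Finset ℕ :=
    fun p => (p.1.image (· - d), p.2.image (· - d)) with hΦ
  have hΦRA : Φ '' RA = RB := by
    apply Set.eq_of_subset_of_subset
    · rintro q ⟨p, ⟨h1, h3, h4, h5⟩, rfl⟩
      have hge1 : ∀ r ∈ p.1, d + 1 ≤ r := fun r hr => by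
        have := (h5 r (Finset.mem_union_left _ hr)).1; omega
      have hge2 : ∀ r ∈ p.2, d + 1 ≤ r := fun r hr => by
        have := (h5 r (Finset.mem_union_right _ hr)).1; omega
      refine ⟨isFarDiff_image_sub d hge1 hge2 h1, ?_, ?_, ?_⟩
      · rcases h3 with ⟨he, hm⟩ | ⟨he, hm⟩
        · exact Or.inl ⟨he, Finset.mem_image.mpr ⟨i, hm, by omega⟩⟩
        · exact Or.inr ⟨he, Finset.mem_image.mpr ⟨i, hm, by omega⟩⟩
      · rcases h4 with ⟨he, hm⟩ | ⟨he, hm⟩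
        · exact Or.inl ⟨he, Finset.mem_image.mpr ⟨j, hm, by omega⟩⟩
        · exact Or.inr ⟨he, Finset.mem_image.mpr ⟨j, hm, by omega⟩⟩
      · intro r hr
        rcases Finset.mem_union.mp hr with h1' | h1'
        · obtain ⟨x, hx, rfl⟩ := Finset.mem_image.mp h1'
          have := h5 x (Finset.mem_union_left _ hx); omega
        · obtain ⟨x, hx, rfl⟩ := Finset.mem_image.mp h1'
          have := h5 x (Finset.mem_union_right _ hx); omega
    · rintro q ⟨h1, h3, h4, h5⟩
      refine ⟨(q.1.image (· + d), q.2.image (· + d)), ⟨?_, ?_, ?_, ?_⟩, ?_⟩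
      · exact isFarDiff_image_add d h1
      · rcases h3 with ⟨he, hm⟩ | ⟨he, hm⟩
        · exact Or.inl ⟨he, Finset.mem_image.mpr ⟨1, hm, by omega⟩⟩
        · exact Or.inr ⟨he, Finset.mem_image.mpr ⟨1, hm, by omega⟩⟩
      · rcases h4 with ⟨he, hm⟩ | ⟨he, hm⟩
        · exact Or.inl ⟨he, Finset.mem_image.mpr ⟨j', hm, by omega⟩⟩
        · exact Or.inr ⟨he, Finset.mem_image.mpr ⟨j', hm, by omega⟩⟩
      · intro r hr
        rcases Finset.mem_union.mp hr with h1' | h1'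
        · obtain ⟨x, hx, rfl⟩ := Finset.mem_image.mp h1'
          have := h5 x (Finset.mem_union_left _ hx); omega
        · obtain ⟨x, hx, rfl⟩ := Finset.mem_image.mp h1'
          have := h5 x (Finset.mem_union_right _ hx); omega
      · show (_, _) = q
        rw [Prod.ext_iff]
        exact ⟨image_add_sub _ _, image_add_sub _ _⟩
  have hΦinj : Set.InjOn Φ RA := by
    rintro p ⟨_, _, _, hp5⟩ q ⟨_, _, _, hq5⟩ he
    have hgp1 : ∀ r ∈ p.1, d ≤ r := fun r hr => by
      have := (hp5 r (Finset.mem_union_left _ hr)).1; omega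
    have hgp2 : ∀ r ∈ p.2, d ≤ r := fun r hr => by
      have := (hp5 r (Finset.mem_union_right _ hr)).1; omega
    have hgq1 : ∀ r ∈ q.1, d ≤ r := fun r hr => by
      have := (hq5 r (Finset.mem_union_left _ hr)).1; omega
    have hgq2 : ∀ r ∈ q.2, d ≤ r := fun r hr => by
      have := (hq5 r (Finset.mem_union_right _ hr)).1; omega
    have e1 : p.1.image (· - d) = q.1.image (· - d) := congrArg Prod.fst he
    have e2 : p.2.image (· - d) = q.2.image (· - d) := congrArg Prod.snd he
    have f1 : p.1 = q.1 := by
      rw [← image_sub_add hgp1, ← image_sub_add hgq1, e1]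
    have f2 : p.2 = q.2 := by
      rw [← image_sub_add hgp2, ← image_sub_add hgq2, e2]
    exact Prod.ext f1 f2
  rw [fdCount, fdCount, hA, hB, hvalinj RA (fun p hp => hp.1),
    hvalinj RB (fun p hp => hp.1), ← hΦRA, Set.ncard_image_of_injOn hΦinj]
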